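/- For d ∈ ℝⁿ with positive entries summing to 1, the fractional volume satisfies the inclusion-exclusion formula: for all τ ∈ (0,1), v(τ,d) = vol{z ∈ [0,1]ⁿ : z·d ≤ τ} = (1/(n!·∏_k d_k)) · Σ_{A ⊆ {1,…,n}} (−1)^{|A|} · max(0, τ − Σ_{k∈A} d_k)ⁿ. -/

import Mathlib

open Finset MeasureTheory

lemma cornerMeas (n : ℕ) (t : ℝ) :
    MeasurableSet {y : Fin n → ℝ | (∀ k, 0 ≤ y k) ∧ ∑ k, y k ≤ t} := by
  have h1 : {y : Fin n → ℝ | ∀ k, 0 ≤ y k} = ⋂ k, {y | 0 ≤ y k} := by ext; simp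
  have : {y : Fin n → ℝ | (∀ k, 0 ≤ y k) ∧ ∑ k, y k ≤ t}
      = {y : Fin n → ℝ | ∀ k, 0 ≤ y k} ∩ {y | ∑ k, y k ≤ t} := rfl
  rw [this, h1]
  exact (MeasurableSet.iInter fun k =>
      measurableSet_le measurable_const (measurable_pi_apply k)).inter
    (measurableSet_le (Finset.measurable_sum _ fun k _ => measurable_pi_apply k) measurable_const)

lemma cornerEmpty (n : ℕ) (t : ℝ) (ht : t < 0) :
    {y : Fin n → ℝ | (∀ k, 0 ≤ y k) ∧ ∑ k, y k ≤ t} = ∅ := by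
  ext y
  simp only [Set.mem_setOf_eq, Set.mem_empty_iff_false, iff_false, not_and]
  intro hy hs
  exact absurd (le_trans (Finset.sum_nonneg fun k _ => hy k) hs) (not_le.2 ht)

lemma cornerVol : ∀ (n : ℕ) (t : ℝ), 0 ≤ t →
    volume {y : Fin n → ℝ | (∀ k, 0 ≤ y k) ∧ ∑ k, y k ≤ t}
      = ENNReal.ofReal (t ^ n / n.factorial) := by
  intro n
  induction n with
  | zero =>
      intro t ht
      have : {y : Fin 0 → ℝ | (∀ k, 0 ≤ y k) ∧ ∑ k, y k ≤ t} = Set.univ := by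
        ext y; simp [Finset.univ_eq_empty, ht]
      rw [this, volume_pi, Measure.pi_univ]
      simp
  | succ n ih =>
      intro t ht
      set P : Set (ℝ × (Fin n → ℝ)) :=
        {p | 0 ≤ p.1 ∧ (∀ k, 0 ≤ p.2 k) ∧ p.1 + ∑ k, p.2 k ≤ t} with hP
      have hPmeas : MeasurableSet P := by
        apply MeasurableSet.inter
        · exact measurableSet_le measurable_const measurable_fst
        apply MeasurableSet.inter
        · show MeasurableSet {p : ℝ × (Fin n → ℝ) | ∀ k, 0 ≤ p.2 k}
          have : {p : ℝ × (Fin n → ℝ) | ∀ k, 0 ≤ p.2 k} = ⋂ k, {p | 0 ≤ p.2 k} := by ext; simp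
          rw [this]
          exact MeasurableSet.iInter fun k =>
            measurableSet_le measurable_const (measurable_snd.eval)
        · exact measurableSet_le
            (measurable_fst.add (Finset.measurable_sum _ fun k _ => by
              exact (measurable_pi_apply k).comp measurable_snd))
            measurable_const
      have hmp := measurePreserving_piFinSuccAbove (fun _ : Fin (n+1) => (volume : Measure ℝ)) 0
      have hpre : (⇑(MeasurableEquiv.piFinSuccAbove (fun _ : Fin (n+1) => ℝ) 0)) ⁻¹' P
          = {y : Fin (n+1) → ℝ | (∀ k, 0 ≤ y k) ∧ ∑ k, y k ≤ t} := by
        ext y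
        simp only [Set.mem_preimage, MeasurableEquiv.piFinSuccAbove_apply, Set.mem_setOf_eq, hP]
        rw [Fin.forall_fin_succ, Fin.sum_univ_succ]
        simp [Fin.removeNth, Fin.zero_succAbove, Fin.tail, and_assoc]
      have key : volume {y : Fin (n+1) → ℝ | (∀ k, 0 ≤ y k) ∧ ∑ k, y k ≤ t}
          = ((volume : Measure ℝ).prod (volume : Measure (Fin n → ℝ))) P := by
        rw [← hpre]
        simp only [volume_pi]
        exact hmp.measure_preimage hPmeas.nullMeasurableSet
      rw [key, Measure.prod_apply hPmeas]
      have hsec : ∀ a : ℝ, volume (Prod.mk a ⁻¹' P)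
          = Set.indicator (Set.Icc 0 t) (fun a => ENNReal.ofReal ((t - a) ^ n / n.factorial)) a := by
        intro a
        by_cases ha : 0 ≤ a ∧ a ≤ t
        · have : Prod.mk a ⁻¹' P = {y : Fin n → ℝ | (∀ k, 0 ≤ y k) ∧ ∑ k, y k ≤ t - a} := by
            ext y
            simp only [Set.mem_preimage, Set.mem_setOf_eq, hP]
            constructor
            · rintro ⟨-, h2, h3⟩; exact ⟨h2, by linarith⟩
            · rintro ⟨h2, h3⟩; exact ⟨ha.1, h2, by linarith⟩
          rw [this, ih (t - a) (by linarith [ha.2]),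
            Set.indicator_of_mem (Set.mem_Icc.2 ha)]
        · have : Prod.mk a ⁻¹' P = ∅ := by
            ext y
            simp only [Set.mem_preimage, Set.mem_setOf_eq, hP, Set.mem_empty_iff_false, iff_false]
            rintro ⟨h1, h2, h3⟩
            exact ha ⟨h1, by linarith [Finset.sum_nonneg fun k (_ : k ∈ Finset.univ) => h2 k]⟩
          rw [this, Set.indicator_of_notMem (by simpa [Set.mem_Icc] using ha)]
          simp
      simp_rw [hsec]
      rw [lintegral_indicator measurableSet_Icc]
      have hcont : Continuous (fun a : ℝ => (t - a) ^ n / n.factorial) := by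
        continuity
      rw [← ofReal_integral_eq_lintegral_ofReal (hcont.integrableOn_Icc)
        ((ae_restrict_iff' measurableSet_Icc).2 (ae_of_all _ fun a ha => by
          have : 0 ≤ (t - a) ^ n := pow_nonneg (by linarith [(Set.mem_Icc.1 ha).2]) n
          positivity))]
      congr 1
      rw [MeasureTheory.integral_Icc_eq_integral_Ioc,
        ← intervalIntegral.integral_of_le ht]
      have : ∫ a in (0:ℝ)..t, (t - a) ^ n / n.factorial
          = (∫ a in (0:ℝ)..t, (t - a) ^ n) / n.factorial := by
        rw [intervalIntegral.integral_div]
      rw [this, intervalIntegral.integral_comp_sub_left (fun x => x ^ n) t]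
      simp only [sub_self, sub_zero]
      rw [integral_pow]
      rw [Nat.factorial_succ]
      have h0 : (n.factorial : ℝ) ≠ 0 := Nat.cast_ne_zero.2 n.factorial_ne_zero
      push_cast
      field_simp
      simp

lemma simplexVol (n : ℕ) (d : Fin n → ℝ) (hd : ∀ k, 0 < d k) (t : ℝ) (ht : 0 ≤ t) :
    volume {x : Fin n → ℝ | (∀ k, 0 ≤ x k) ∧ ∑ k, x k * d k ≤ t}
      = ENNReal.ofReal (t ^ n / (n.factorial * ∏ k, d k)) := by
  classical
  set f : (Fin n → ℝ) →ₗ[ℝ] (Fin n → ℝ) := Matrix.toLin' (Matrix.diagonal d) with hf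
  have hdet : LinearMap.det f = ∏ k, d k := by
    rw [hf, LinearMap.det_toLin', Matrix.det_diagonal]
  have hprodpos : 0 < ∏ k, d k := Finset.prod_pos fun k _ => hd k
  have hdet0 : LinearMap.det f ≠ 0 := by rw [hdet]; exact ne_of_gt hprodpos
  have happ : ∀ (x : Fin n → ℝ) (k : Fin n), f x k = d k * x k := by
    intro x k
    simp [hf, Matrix.toLin'_apply, Matrix.mulVec_diagonal]
  have hpre : (⇑f) ⁻¹' {y : Fin n → ℝ | (∀ k, 0 ≤ y k) ∧ ∑ k, y k ≤ t}
      = {x : Fin n → ℝ | (∀ k, 0 ≤ x k) ∧ ∑ k, x k * d k ≤ t} := by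
    ext x
    simp only [Set.mem_preimage, Set.mem_setOf_eq, happ]
    constructor
    · rintro ⟨h1, h2⟩
      refine ⟨fun k => nonneg_of_mul_nonneg_right ?_ (hd k), ?_⟩
      · exact h1 k
      · calc ∑ k, x k * d k = ∑ k, d k * x k := by simp [mul_comm]
          _ ≤ t := h2
    · rintro ⟨h1, h2⟩
      refine ⟨fun k => mul_nonneg (hd k).le (h1 k), ?_⟩
      calc ∑ k, d k * x k = ∑ k, x k * d k := by simp [mul_comm]
        _ ≤ t := h2
  have := Measure.addHaar_preimage_linearMap (volume : Measure (Fin n → ℝ)) hdet0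
    {y : Fin n → ℝ | (∀ k, 0 ≤ y k) ∧ ∑ k, y k ≤ t}
  rw [hpre] at this
  rw [this, cornerVol n t ht, hdet, ← ENNReal.ofReal_mul (by positivity)]
  congr 1
  rw [abs_of_pos (by positivity)]
  field_simp

lemma simplexMeas (n : ℕ) (d : Fin n → ℝ) (t : ℝ) :
    MeasurableSet {x : Fin n → ℝ | (∀ k, 0 ≤ x k) ∧ ∑ k, x k * d k ≤ t} := by
  have h1 : {x : Fin n → ℝ | ∀ k, 0 ≤ x k} = ⋂ k, {x | 0 ≤ x k} := by ext; simp
  have : {x : Fin n → ℝ | (∀ k, 0 ≤ x k) ∧ ∑ k, x k * d k ≤ t}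
      = {x : Fin n → ℝ | ∀ k, 0 ≤ x k} ∩ {x | ∑ k, x k * d k ≤ t} := rfl
  rw [this, h1]
  exact (MeasurableSet.iInter fun k =>
      measurableSet_le measurable_const (measurable_pi_apply k)).inter
    (measurableSet_le (Finset.measurable_sum _ fun k _ =>
      (measurable_pi_apply k).mul_const _) measurable_const)

lemma EMeas (n : ℕ) (d : Fin n → ℝ) (τ : ℝ) (A : Finset (Fin n)) :
    MeasurableSet {z : Fin n → ℝ |
      (∀ k, 0 ≤ z k) ∧ (∀ k ∈ A, 1 < z k) ∧ ∑ k, z k * d k ≤ τ} := by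
  have : {z : Fin n → ℝ | (∀ k, 0 ≤ z k) ∧ (∀ k ∈ A, 1 < z k) ∧ ∑ k, z k * d k ≤ τ}
      = (⋂ k, {z : Fin n → ℝ | 0 ≤ z k}) ∩ ((⋂ k ∈ A, {z : Fin n → ℝ | 1 < z k}) ∩
        {z | ∑ k, z k * d k ≤ τ}) := by
    ext z
    simp only [Set.mem_setOf_eq, Set.mem_inter_iff, Set.mem_iInter]
  rw [this]
  exact (MeasurableSet.iInter fun k =>
      measurableSet_le measurable_const (measurable_pi_apply k)).inter
    ((MeasurableSet.biInter A.countable_toSet fun k _ =>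
        measurableSet_lt measurable_const (measurable_pi_apply k)).inter
      (measurableSet_le (Finset.measurable_sum _ fun k _ =>
        (measurable_pi_apply k).mul_const _) measurable_const))

lemma hyperNull (n : ℕ) : volume (⋃ k, {x : Fin n → ℝ | x k = 0}) = 0 := by
  refine measure_iUnion_null fun k => ?_
  rw [volume_pi]
  exact Measure.pi_hyperplane _ k 0

lemma EVol (n : ℕ) (hn : 0 < n) (d : Fin n → ℝ) (hd : ∀ k, 0 < d k) (τ : ℝ)
    (A : Finset (Fin n)) :
    volume {z : Fin n → ℝ | (∀ k, 0 ≤ z k) ∧ (∀ k ∈ A, 1 < z k) ∧ ∑ k, z k * d k ≤ τ}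
      = ENNReal.ofReal ((max 0 (τ - ∑ k ∈ A, d k)) ^ n / (n.factorial * ∏ k, d k)) := by
  classical
  set c : ℝ := ∑ k ∈ A, d k with hc
  by_cases h : τ - c < 0
  · have hempty : {z : Fin n → ℝ | (∀ k, 0 ≤ z k) ∧ (∀ k ∈ A, 1 < z k) ∧ ∑ k, z k * d k ≤ τ}
        = ∅ := by
      ext z
      simp only [Set.mem_setOf_eq, Set.mem_empty_iff_false, iff_false]
      rintro ⟨h1, h2, h3⟩
      have hcle : c ≤ ∑ k ∈ A, z k * d k := by
        apply Finset.sum_le_sum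
        intro k hk
        nlinarith [h2 k hk, hd k]
      have hsub : ∑ k ∈ A, z k * d k ≤ ∑ k, z k * d k := by
        apply Finset.sum_le_sum_of_subset_of_nonneg (Finset.subset_univ A)
        intro k _ _
        exact mul_nonneg (h1 k) (hd k).le
      linarith
    rw [hempty]
    rw [max_eq_left h.le, zero_pow (by omega : n ≠ 0), zero_div]
    simp
  · push_neg at h
    rw [max_eq_right h]
    set e : Fin n → ℝ := fun k => if k ∈ A then 1 else 0 with he
    set S : Set (Fin n → ℝ) := {x | (∀ k, 0 ≤ x k) ∧ ∑ k, x k * d k ≤ τ - c} with hS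
    have hesum : ∑ k, e k * d k = c := by
      rw [he, hc]
      simp only [ite_mul, one_mul, zero_mul]
      rw [Finset.sum_ite_mem, Finset.univ_inter]
    have hpre : (fun x => e + x) ⁻¹'
        {z : Fin n → ℝ | (∀ k, 0 ≤ z k) ∧ (∀ k ∈ A, 1 < z k) ∧ ∑ k, z k * d k ≤ τ}
        ⊆ S := by
      intro x hx
      simp only [Set.mem_preimage, Set.mem_setOf_eq, Pi.add_apply] at hx
      obtain ⟨h1, h2, h3⟩ := hx
      constructor
      · intro k
        by_cases hk : k ∈ A
        · have := h2 k hk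
          simp only [he, if_pos hk] at this
          linarith
        · have := h1 k
          simp only [he, if_neg hk] at this
          linarith
      · have : ∑ k, (e k + x k) * d k = c + ∑ k, x k * d k := by
          simp_rw [add_mul]
          rw [Finset.sum_add_distrib, hesum]
        linarith [h3, this ▸ h3]
    have hsup : S \ (⋃ k, {x : Fin n → ℝ | x k = 0}) ⊆ (fun x => e + x) ⁻¹'
        {z : Fin n → ℝ | (∀ k, 0 ≤ z k) ∧ (∀ k ∈ A, 1 < z k) ∧ ∑ k, z k * d k ≤ τ} := by
      rintro x ⟨⟨h1, h2⟩, hN⟩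
      simp only [Set.mem_iUnion, Set.mem_setOf_eq, not_exists] at hN
      have hpos : ∀ k, 0 < x k := fun k => lt_of_le_of_ne (h1 k) (Ne.symm (hN k))
      simp only [Set.mem_preimage, Set.mem_setOf_eq, Pi.add_apply]
      refine ⟨fun k => ?_, fun k hk => ?_, ?_⟩
      · have : (0:ℝ) ≤ e k := by simp only [he]; split <;> norm_num
        linarith [hpos k]
      · simp only [he, if_pos hk]
        linarith [hpos k]
      · have : ∑ k, (e k + x k) * d k = c + ∑ k, x k * d k := by
          simp_rw [add_mul]
          rw [Finset.sum_add_distrib, hesum]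
        rw [this]
        linarith
    have htrans : volume ((fun x => e + x) ⁻¹'
        {z : Fin n → ℝ | (∀ k, 0 ≤ z k) ∧ (∀ k ∈ A, 1 < z k) ∧ ∑ k, z k * d k ≤ τ})
        = volume {z : Fin n → ℝ | (∀ k, 0 ≤ z k) ∧ (∀ k ∈ A, 1 < z k) ∧ ∑ k, z k * d k ≤ τ} :=
      measure_preimage_add volume e _
    have hSvol : volume S = ENNReal.ofReal ((τ - c) ^ n / (n.factorial * ∏ k, d k)) :=
      simplexVol n d hd (τ - c) h
    rw [← hSvol, ← htrans]
    apply le_antisymm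
    · exact measure_mono hpre
    · calc volume S ≤ volume ((fun x => e + x) ⁻¹'
          {z : Fin n → ℝ | (∀ k, 0 ≤ z k) ∧ (∀ k ∈ A, 1 < z k) ∧ ∑ k, z k * d k ≤ τ}
          ∪ ⋃ k, {x : Fin n → ℝ | x k = 0}) := by
            apply measure_mono
            intro x hx
            by_cases hxN : x ∈ ⋃ k, {x : Fin n → ℝ | x k = 0}
            · exact Or.inr hxN
            · exact Or.inl (hsup ⟨hx, hxN⟩)
        _ ≤ _ + volume (⋃ k, {x : Fin n → ℝ | x k = 0}) := measure_union_le _ _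
        _ = _ := by rw [hyperNull]; ring

theorem stmt_10 (n : ℕ) (d : Fin n → ℝ) (hd : ∀ k, 0 < d k) (hsum : ∑ k, d k = 1)
    (τ : ℝ) (hτ : τ ∈ Set.Ioo (0 : ℝ) 1) :
    (volume {z : Fin n → ℝ | z ∈ Set.Icc (0 : Fin n → ℝ) 1 ∧ ∑ k, z k * d k ≤ τ}).toReal =
      (1 / (n.factorial * ∏ k, d k)) *
        ∑ A : Finset (Fin n), (-1 : ℝ) ^ A.card * max 0 (τ - ∑ k ∈ A, d k) ^ n := by
  classical
  have hn : 0 < n := by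
    rcases Nat.eq_zero_or_pos n with h | h
    · subst h; simp at hsum
    · exact h
  set E : Finset (Fin n) → Set (Fin n → ℝ) := fun A =>
    {z | (∀ k, 0 ≤ z k) ∧ (∀ k ∈ A, 1 < z k) ∧ ∑ k, z k * d k ≤ τ} with hE
  set T : Set (Fin n → ℝ) := {z | z ∈ Set.Icc (0 : Fin n → ℝ) 1 ∧ ∑ k, z k * d k ≤ τ} with hT
  have hTeq : T = Set.Icc (0 : Fin n → ℝ) 1 ∩ {z | ∑ k, z k * d k ≤ τ} := rfl
  have hTmeas : MeasurableSet T := by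
    rw [hTeq]
    exact measurableSet_Icc.inter (measurableSet_le (Finset.measurable_sum _ fun k _ =>
      (measurable_pi_apply k).mul_const _) measurable_const)
  have hEmeas : ∀ A, MeasurableSet (E A) := fun A => EMeas n d τ A
  have hEvol : ∀ A : Finset (Fin n), volume (E A)
      = ENNReal.ofReal ((max 0 (τ - ∑ k ∈ A, d k)) ^ n / (n.factorial * ∏ k, d k)) :=
    fun A => EVol n hn d hd τ A
  have hEfin : ∀ A, volume (E A) < ⊤ := fun A => by
    rw [hEvol A]; exact ENNReal.ofReal_lt_top
  have hprodpos : 0 < ∏ k, d k := Finset.prod_pos fun k _ => hd k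
  have hDpos : (0:ℝ) < n.factorial * ∏ k, d k := by positivity
  -- pointwise inclusion-exclusion identity
  have pointwise : ∀ z : Fin n → ℝ, T.indicator (fun _ => (1:ℝ)) z
      = ∑ A : Finset (Fin n), (-1:ℝ) ^ A.card * (E A).indicator (fun _ => (1:ℝ)) z := by
    intro z
    by_cases hz : (∀ k, 0 ≤ z k) ∧ ∑ k, z k * d k ≤ τ
    · set B : Finset (Fin n) := Finset.univ.filter (fun k => 1 < z k) with hB
      have hmemE : ∀ A : Finset (Fin n), z ∈ E A ↔ A ⊆ B := by
        intro A
        simp only [hE, Set.mem_setOf_eq]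
        constructor
        · rintro ⟨-, h2, -⟩ k hk
          simp only [hB, Finset.mem_filter, Finset.mem_univ, true_and]
          exact h2 k hk
        · intro hAB
          refine ⟨hz.1, fun k hk => ?_, hz.2⟩
          have := hAB hk
          simp only [hB, Finset.mem_filter, Finset.mem_univ, true_and] at this
          exact this
      have hrhs : ∑ A : Finset (Fin n), (-1:ℝ) ^ A.card * (E A).indicator (fun _ => (1:ℝ)) z
          = ∑ A ∈ B.powerset, (-1:ℝ) ^ A.card := by
        rw [← Finset.sum_filter_add_sum_filter_not Finset.univ (fun A => A ⊆ B)]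
        have h1 : ∀ A ∈ Finset.univ.filter (fun A => A ⊆ B),
            (-1:ℝ) ^ A.card * (E A).indicator (fun _ => (1:ℝ)) z = (-1:ℝ) ^ A.card := by
          intro A hA
          simp only [Finset.mem_filter] at hA
          rw [Set.indicator_of_mem ((hmemE A).2 hA.2)]
          ring
        have h2 : ∀ A ∈ Finset.univ.filter (fun A => ¬ A ⊆ B),
            (-1:ℝ) ^ A.card * (E A).indicator (fun _ => (1:ℝ)) z = 0 := by
          intro A hA
          simp only [Finset.mem_filter] at hA
          rw [Set.indicator_of_notMem (fun hmem => hA.2 ((hmemE A).1 hmem))]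
          ring
        rw [Finset.sum_congr rfl h1, Finset.sum_congr rfl h2, Finset.sum_const_zero, add_zero]
        apply Finset.sum_congr _ (fun _ _ => rfl)
        ext A
        simp [Finset.mem_powerset]
      have hps : ∑ A ∈ B.powerset, (-1:ℝ) ^ A.card = if B = ∅ then 1 else 0 := by
        have h := Finset.sum_powerset_neg_one_pow_card (α := Fin n) (x := B)
        have h2 := congrArg (fun z : ℤ => (z : ℝ)) h
        push_cast at h2
        simpa using h2
      rw [hrhs, hps]
      by_cases hBe : B = ∅
      · have hzT : z ∈ T := by
          rw [hT]
          refine ⟨⟨fun k => hz.1 k, fun k => ?_⟩, hz.2⟩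
          by_contra hk
          push_neg at hk
          have : k ∈ B := by
            simp only [hB, Finset.mem_filter, Finset.mem_univ, true_and]
            exact hk
          rw [hBe] at this
          exact absurd this (Finset.notMem_empty k)
        rw [Set.indicator_of_mem hzT, if_pos hBe]
      · have hzT : z ∉ T := by
          rw [hT]
          intro hmem
          obtain ⟨⟨-, hle⟩, -⟩ := hmem
          apply hBe
          rw [Finset.filter_eq_empty_iff]
          intro k _
          exact not_lt.2 (hle k)
        rw [Set.indicator_of_notMem hzT, if_neg hBe]
    · have hzT : z ∉ T := by
        rw [hT]
        rintro ⟨⟨h0, -⟩, hs⟩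
        exact hz ⟨fun k => h0 k, hs⟩
      have hzE : ∀ A, z ∉ E A := by
        intro A hmem
        obtain ⟨h1, -, h3⟩ := hmem
        exact hz ⟨h1, h3⟩
      rw [Set.indicator_of_notMem hzT]
      symm
      apply Finset.sum_eq_zero
      intro A _
      rw [Set.indicator_of_notMem (hzE A)]
      ring
  have hInt : ∀ A, Integrable ((E A).indicator fun _ => (1:ℝ)) volume := fun A =>
    (integrable_indicator_iff (hEmeas A)).2 (integrableOn_const (hEfin A).ne)
  have step1 : (volume T).toReal = ∫ z, T.indicator (fun _ => (1:ℝ)) z := by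
    rw [integral_indicator_const (1:ℝ) hTmeas, smul_eq_mul, mul_one, measureReal_def]
  rw [step1]
  have step2 : ∫ z, T.indicator (fun _ => (1:ℝ)) z
      = ∑ A : Finset (Fin n), (-1:ℝ) ^ A.card * (volume (E A)).toReal := by
    simp only [pointwise]
    rw [integral_finset_sum Finset.univ (fun A _ => (hInt A).const_mul _)]
    apply Finset.sum_congr rfl
    intro A _
    rw [MeasureTheory.integral_const_mul, integral_indicator_const (1:ℝ) (hEmeas A), smul_eq_mul, mul_one, measureReal_def]
  rw [step2, Finset.mul_sum]
  apply Finset.sum_congr rfl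
  intro A _
  rw [hEvol A, ENNReal.toReal_ofReal (by positivity)]
  ring
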